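/- Let d and n be positive integers with d dividing n, let D be the unique subgroup of order d of the cyclic group ℤ/nℤ, and let S be a primitive Schur partition of D (i.e., the only subgroups of D that are unions of blocks of S are the trivial subgroup and D itself). Then the number of Schur partitions T of ℤ/nℤ such that D is a union of blocks of T, the blocks of T contained in D are exactly the blocks of S, and every block of T not contained in D is a union of cosets of D, equals Ω(n/d), the number of Schur partitions of ℤ/(n/d)ℤ. -/

import Mathlib

open scoped Pointwise

noncomputable def classSum {G : Type*} [AddCommGroup G] (C : Set G) :
    AddMonoidAlgebra ℚ G :=
  ∑ᶠ g ∈ C, AddMonoidAlgebra.single g (1 : ℚ)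

def IsSchurPartition {G : Type*} [AddCommGroup G] (P : Set (Set G)) : Prop :=
  Setoid.IsPartition P ∧
  ({0} : Set G) ∈ P ∧
  (∀ C ∈ P, -C ∈ P) ∧
  ∀ C ∈ P, ∀ D ∈ P,
    classSum C * classSum D ∈ AddSubmonoid.closure (classSum '' P)

noncomputable def Omega (n : ℕ) : ℕ :=
  Nat.card {P : Set (Set (ZMod n)) // IsSchurPartition P}

/-- `A` is a union of blocks of the partition `P`: every block meeting `A` lies in `A`. -/
def IsBlockUnion {G : Type*} (P : Set (Set G)) (A : Set G) : Prop :=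
  ∀ C ∈ P, (C ∩ A).Nonempty → C ⊆ A

open Classical in
lemma classSum_eq_sum {G : Type*} [AddCommGroup G] [Finite G] (C : Set G) :
    classSum C = ∑ g ∈ (Set.toFinite C).toFinset, AddMonoidAlgebra.single g (1 : ℚ) := by
  rw [classSum, ← finsum_mem_coe_finset, Set.Finite.coe_toFinset]

open Classical in
lemma classSum_apply {G : Type*} [AddCommGroup G] [Finite G] (C : Set G) (g : G) :
    (classSum C).coeff g = if g ∈ C then 1 else 0 := by
  rw [classSum_eq_sum, AddMonoidAlgebra.coeff_sum, Finset.sum_apply']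
  simp [Finsupp.single_apply, Finset.sum_ite_eq, Set.Finite.mem_toFinset]

noncomputable def cnt {G : Type*} [AddCommGroup G] (A B : Set G) (g : G) : ℕ :=
  Set.ncard {a ∈ A | g - a ∈ B}

open Classical in
lemma cnt_eq_card {G : Type*} [AddCommGroup G] [Finite G] (A B : Set G) (g : G) :
    cnt A B g = ((Set.toFinite A).toFinset.filter (fun a => g - a ∈ B)).card := by
  rw [cnt, Set.ncard_eq_toFinset_card _ (Set.toFinite _)]
  congr 1
  ext a
  simp [Set.Finite.mem_toFinset]

open Classical in
lemma classSum_mul_apply {G : Type*} [AddCommGroup G] [Finite G] (A B : Set G) (g : G) :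
    (classSum A * classSum B).coeff g = (cnt A B g : ℚ) := by
  rw [classSum_eq_sum, classSum_eq_sum, Finset.sum_mul_sum]
  simp only [AddMonoidAlgebra.single_mul_single, one_mul]
  rw [AddMonoidAlgebra.coeff_sum, Finset.sum_apply']
  have : ∀ i : G, ((∑ j ∈ (Set.toFinite B).toFinset, AddMonoidAlgebra.single (i+j) (1:ℚ)) : AddMonoidAlgebra ℚ G).coeff g = ∑ j ∈ (Set.toFinite B).toFinset, (AddMonoidAlgebra.single (i+j) (1:ℚ) : AddMonoidAlgebra ℚ G).coeff g := fun i => by rw [AddMonoidAlgebra.coeff_sum, Finset.sum_apply']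
  simp only [this]
  simp only [AddMonoidAlgebra.coeff_single, Finsupp.single_apply]
  simp only [← eq_sub_iff_add_eq']
  rw [cnt_eq_card, Finset.card_filter]
  push_cast
  refine Finset.sum_congr rfl fun i _ => ?_
  rw [Finset.sum_ite_eq']
  simp [Set.Finite.mem_toFinset]

lemma blocks_eq {G : Type*} {P : Set (Set G)} (hP : Setoid.IsPartition P)
    {C C' : Set G} (hC : C ∈ P) (hC' : C' ∈ P) {a : G} (ha : a ∈ C) (ha' : a ∈ C') :
    C = C' := by
  obtain ⟨B, -, hu⟩ := hP.2 a
  rw [hu C ⟨hC, ha⟩, hu C' ⟨hC', ha'⟩]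

open Classical in
lemma mem_closure_iff' {G : Type*} [AddCommGroup G] [Finite G] {P : Set (Set G)}
    (hP : Setoid.IsPartition P) (x : AddMonoidAlgebra ℚ G) :
    x ∈ AddSubmonoid.closure (classSum '' P) ↔
      (∀ g, ∃ m : ℕ, x.coeff g = (m : ℚ)) ∧ ∀ C ∈ P, ∀ a ∈ C, ∀ b ∈ C, x.coeff a = x.coeff b := by
  constructor
  · intro hx
    induction hx using AddSubmonoid.closure_induction with
    | mem y hy =>
      obtain ⟨C₀, hC₀, rfl⟩ := hy
      constructor
      · intro g
        rw [classSum_apply]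
        exact ⟨if g ∈ C₀ then 1 else 0, by split <;> simp⟩
      · intro C hC a ha b hb
        rw [classSum_apply, classSum_apply]
        refine if_congr ⟨fun h => ?_, fun h => ?_⟩ rfl rfl
        · rwa [← blocks_eq hP hC hC₀ ha h]
        · rwa [← blocks_eq hP hC hC₀ hb h]
    | zero => exact ⟨fun g => ⟨0, by simp⟩, fun C _ a _ b _ => by simp⟩
    | add y z _ _ hy hz =>
      refine ⟨fun g => ?_, fun C hC a ha b hb => ?_⟩
      · obtain ⟨m1, h1⟩ := hy.1 g
        obtain ⟨m2, h2⟩ := hz.1 g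
        exact ⟨m1 + m2, by rw [AddMonoidAlgebra.coeff_add, Finsupp.add_apply, h1, h2]; push_cast; ring⟩
      · rw [AddMonoidAlgebra.coeff_add, Finsupp.add_apply, Finsupp.add_apply, hy.2 C hC a ha b hb, hz.2 C hC a ha b hb]
  · rintro ⟨h1, h2⟩
    classical
    set rep : Set G → G := fun C => if h : C.Nonempty then h.some else 0 with hrep
    have hrepmem : ∀ C ∈ P, rep C ∈ C := by
      intro C hC
      have hne : C.Nonempty := Set.nonempty_iff_ne_empty.2 (fun h => hP.1 (h ▸ hC))
      simp only [hrep, dif_pos hne]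
      exact hne.some_mem
    have hx : x = ∑ C ∈ (Set.toFinite P).toFinset, (x.coeff (rep C)).num.toNat • classSum C := by
      ext g
      obtain ⟨Cg, ⟨hCgP, hgCg⟩, huniq⟩ := hP.2 g
      rw [AddMonoidAlgebra.coeff_sum, Finset.sum_apply']
      have : ∀ C ∈ (Set.toFinite P).toFinset,
          ((x.coeff (rep C)).num.toNat • classSum C).coeff g
            = if C = Cg then ((x.coeff (rep C)).num.toNat : ℚ) else 0 := by
        intro C hCf
        have hCP : C ∈ P := (Set.Finite.mem_toFinset _).1 hCf
        rw [AddMonoidAlgebra.coeff_smul, Finsupp.smul_apply, classSum_apply]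
        by_cases hgc : g ∈ C
        · rw [if_pos hgc, if_pos (huniq C ⟨hCP, hgc⟩)]
          simp
        · rw [if_neg hgc, if_neg, smul_zero]
          rintro rfl; exact hgc hgCg
      rw [Finset.sum_congr rfl this, Finset.sum_ite_eq' _ Cg,
        if_pos ((Set.Finite.mem_toFinset _).2 hCgP)]
      have hconst : x.coeff (rep Cg) = x.coeff g := h2 Cg hCgP (rep Cg) (hrepmem Cg hCgP) g hgCg
      obtain ⟨m, hm⟩ := h1 g
      rw [hconst, hm]
      simp
    rw [hx]
    refine AddSubmonoid.sum_mem _ (fun C hCf => ?_)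
    exact AddSubmonoid.nsmul_mem _ (AddSubmonoid.subset_closure
      (Set.mem_image_of_mem _ ((Set.Finite.mem_toFinset _).1 hCf))) _


lemma cnt_eq_zero {G : Type*} [AddCommGroup G] (K : AddSubgroup G) {A B : Set G}
    (hA : A ⊆ K) (hB : B ⊆ K) {g : G} (hg : g ∉ (K : Set G)) : cnt A B g = 0 := by
  rw [cnt]
  convert Set.ncard_empty G
  ext a
  simp only [Set.mem_setOf_eq, Set.mem_empty_iff_false, iff_false, not_and]
  intro ha hb
  exact hg (by simpa using K.add_mem (hB hb) (hA ha))

lemma cnt_comm {G : Type*} [AddCommGroup G] (A B : Set G) (g : G) :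
    cnt A B g = cnt B A g := by
  rw [cnt, cnt]
  apply Set.ncard_congr (fun a _ => g - a)
  · rintro a ⟨ha, hb⟩
    exact ⟨hb, by simpa using ha⟩
  · intro a b _ _ h
    simpa using h
  · rintro b ⟨hb, ha⟩
    exact ⟨g - b, ⟨ha, by simpa using hb⟩, by simp⟩

open Classical in
lemma cnt_mixed {G Q : Type*} [AddCommGroup G] [AddCommGroup Q] (π : G →+ Q)
    {A : Set G} (hA : ∀ a ∈ A, π a = 0) (B₀ : Set Q) (g : G) :
    cnt A (π ⁻¹' B₀) g = if π g ∈ B₀ then A.ncard else 0 := by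
  rw [cnt]
  have : {a ∈ A | g - a ∈ π ⁻¹' B₀} = if π g ∈ B₀ then A else ∅ := by
    ext a
    simp only [Set.mem_setOf_eq, Set.mem_preimage, map_sub]
    constructor
    · rintro ⟨ha, hb⟩
      rw [hA a ha, sub_zero] at hb
      simp [hb, ha]
    · intro h
      split_ifs at h with hc
      · exact ⟨h, by rw [hA a h, sub_zero]; exact hc⟩
      · exact absurd h (Set.notMem_empty a)
  rw [this]
  split_ifs <;> simp

lemma cnt_image {G H : Type*} [AddCommGroup G] [AddCommGroup H] (ι : H →+ G)
    (hι : Function.Injective ι) (A B : Set H) (a : H) :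
    cnt (ι '' A) (ι '' B) (ι a) = cnt A B a := by
  rw [cnt, cnt]
  have : {x ∈ ι '' A | ι a - x ∈ ι '' B} = ι '' {y ∈ A | a - y ∈ B} := by
    ext x
    constructor
    · rintro ⟨⟨y, hy, rfl⟩, hb⟩
      rw [← map_sub] at hb
      obtain ⟨b, hbB, hbe⟩ := hb
      exact ⟨y, ⟨hy, by rwa [← hι hbe]⟩, rfl⟩
    · rintro ⟨y, ⟨hy, hb⟩, rfl⟩
      exact ⟨⟨y, hy, rfl⟩, by rw [← map_sub]; exact ⟨a - y, hb, rfl⟩⟩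
  rw [this, Set.ncard_image_of_injective _ hι]

open Classical in
lemma cnt_sat_sat {G Q : Type*} [AddCommGroup G] [AddCommGroup Q] [Finite G] [Finite Q]
    (π : G →+ Q) {k : ℕ} (hfib : ∀ q : Q, {x : G | π x = q}.ncard = k)
    (B₀ B₀' : Set Q) (g : G) :
    cnt (π ⁻¹' B₀) (π ⁻¹' B₀') g = k * cnt B₀ B₀' (π g) := by
  have := Fintype.ofFinite G
  have := Fintype.ofFinite Q
  set s : Finset G := Finset.univ.filter (fun a => π a ∈ B₀ ∧ π g - π a ∈ B₀') with hs
  set t : Finset Q := Finset.univ.filter (fun q => q ∈ B₀ ∧ π g - q ∈ B₀') with ht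
  have hcnts : cnt (π ⁻¹' B₀) (π ⁻¹' B₀') g = s.card := by
    rw [cnt, ← Set.ncard_coe_finset]
    congr 1
    ext a
    simp [hs, map_sub]
  have hcntt : cnt B₀ B₀' (π g) = t.card := by
    rw [cnt, ← Set.ncard_coe_finset]
    congr 1
    ext q
    simp [ht]
  rw [hcnts, hcntt]
  rw [Finset.card_eq_sum_card_fiberwise (f := π) (t := t)
    (fun a ha => by simp only [Finset.mem_coe, hs, Finset.mem_filter] at ha; simp [ht, ha.2])]
  have : ∀ q ∈ t, (s.filter (fun a => π a = q)).card = k := by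
    intro q hq
    simp only [ht, Finset.mem_filter] at hq
    rw [← hfib q, ← Set.ncard_coe_finset]
    congr 1
    ext a
    simp only [Finset.coe_filter, Set.mem_setOf_eq, hs, Finset.mem_filter, Finset.mem_univ,
      true_and]
    constructor
    · rintro ⟨-, h⟩; exact h
    · rintro rfl; exact ⟨⟨hq.2.1, hq.2.2⟩, rfl⟩
  rw [Finset.sum_congr rfl this, Finset.sum_const, smul_eq_mul, mul_comm]

lemma zmod_setup (n d : ℕ) (hn : 0 < n) (hd : 0 < d) (hdvd : d ∣ n)
    (D : AddSubgroup (ZMod n)) (hD : Nat.card D = d) :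
    ∃ π : ZMod n →+ ZMod (n / d), Function.Surjective π ∧ (∀ x, π x = 0 ↔ x ∈ D) ∧
      ∀ q, {x : ZMod n | π x = q}.ncard = d := by
  haveI : NeZero n := ⟨hn.ne'⟩
  have hm0 : 0 < n / d := Nat.div_pos (Nat.le_of_dvd hn hdvd) hd
  haveI : NeZero (n / d) := ⟨hm0.ne'⟩
  have hmd : n / d ∣ n := Nat.div_dvd_of_dvd hdvd
  set ρ := ZMod.castHom hmd (ZMod (n / d)) with hρ
  set π := ρ.toAddMonoidHom with hπ
  have hπapp : ∀ x : ZMod n, π x = ((x.val : ℕ) : ZMod (n / d)) := by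
    intro x
    rw [hπ, RingHom.toAddMonoidHom_eq_coe, AddMonoidHom.coe_coe, hρ, ZMod.castHom_apply,
      ZMod.natCast_val]
  have hsurj : Function.Surjective π := by
    intro y
    refine ⟨((y.val : ℕ) : ZMod n), ?_⟩
    show ρ _ = y
    rw [map_natCast]
    exact ZMod.natCast_rightInverse y
  have hle : D ≤ π.ker := by
    intro x hx
    have h1 : d • (⟨x, hx⟩ : D) = 0 := by
      rw [← hD]
      exact card_nsmul_eq_zero'
    have h2 : d • x = 0 := by
      have := congrArg (AddSubgroup.subtype D) h1
      simpa using this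
    have h3 : ((d * x.val : ℕ) : ZMod n) = 0 := by
      push_cast
      rw [ZMod.natCast_val, ZMod.cast_id]
      rw [← nsmul_eq_mul]
      exact_mod_cast h2
    rw [ZMod.natCast_eq_zero_iff] at h3
    have h4 : (n / d) ∣ x.val := by
      have h5 : d * (n / d) ∣ d * x.val := by
        rw [Nat.mul_div_cancel' hdvd]; exact h3
      exact (mul_dvd_mul_iff_left (hd.ne' : (d : ℕ) ≠ 0)).1 h5
    rw [AddMonoidHom.mem_ker, hπapp, ZMod.natCast_eq_zero_iff]
    exact h4
  have hkercard : Nat.card π.ker = d := by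
    have h1 : π.ker.index = Nat.card π.range := AddSubgroup.index_ker π
    have h2 : π.range = ⊤ := AddMonoidHom.range_eq_top.2 hsurj
    have h3 : Nat.card π.range = n / d := by rw [h2, AddSubgroup.card_top, Nat.card_zmod]
    have h4 : Nat.card π.ker * π.ker.index = Nat.card (ZMod n) := π.ker.card_mul_index
    rw [h1, h3, Nat.card_zmod] at h4
    have : d * (n / d) = n := Nat.mul_div_cancel' hdvd
    exact Nat.eq_of_mul_eq_mul_right hm0 (by rw [h4, this])
  have hDker : D = π.ker := by
    haveI : Finite π.ker := Subtype.finite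
    exact AddSubgroup.eq_of_le_of_card_ge hle (le_of_eq (hkercard.trans hD.symm))
  refine ⟨π, hsurj, fun x => ?_, fun q => ?_⟩
  · rw [← AddMonoidHom.mem_ker, hDker]
  · obtain ⟨x₀, hx₀⟩ := hsurj q
    have hbij : {x : ZMod n | π x = q}.ncard = {x : ZMod n | π x = 0}.ncard := by
      apply Set.ncard_congr (fun x _ => x - x₀)
      · intro a ha
        simp only [Set.mem_setOf_eq] at ha ⊢
        rw [map_sub, ha, hx₀, sub_self]
      · intro a b _ _ h
        simpa using h
      · intro b hb
        refine ⟨b + x₀, ?_, by simp⟩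
        simp only [Set.mem_setOf_eq] at hb ⊢
        rw [map_add, hb, hx₀, zero_add]
    rw [hbij]
    have : {x : ZMod n | π x = 0} = (D : Set (ZMod n)) := by
      ext x
      rw [Set.mem_setOf_eq, ← AddMonoidHom.mem_ker, hDker]
      rfl
    rw [this, ← hD]
    exact (Nat.card_coe_set_eq _).symm

lemma schur_prod_iff {G : Type*} [AddCommGroup G] [Finite G] {P : Set (Set G)}
    (hP : Setoid.IsPartition P) (A B : Set G) :
    classSum A * classSum B ∈ AddSubmonoid.closure (classSum '' P) ↔
      ∀ C ∈ P, ∀ a ∈ C, ∀ b ∈ C, cnt A B a = cnt A B b := by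
  rw [mem_closure_iff' hP]
  constructor
  · rintro ⟨h1, h2⟩ C hC a ha b hb
    have := h2 C hC a ha b hb
    rw [classSum_mul_apply, classSum_mul_apply] at this
    exact_mod_cast this
  · intro h
    refine ⟨fun g => ⟨cnt A B g, classSum_mul_apply A B g⟩, fun C hC a ha b hb => ?_⟩
    rw [classSum_mul_apply, classSum_mul_apply]
    exact_mod_cast h C hC a ha b hb

variable {G Q : Type*} [AddCommGroup G] [AddCommGroup Q]

def upPart (π : G →+ Q) (K : AddSubgroup G) (S : Set (Set K)) (P : Set (Set Q)) :
    Set (Set G) :=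
  ((fun B : Set K => ((↑) '' B : Set G)) '' S) ∪ ((fun B : Set Q => π ⁻¹' B) '' (P \ {{0}}))

def downPart (π : G →+ Q) (K : AddSubgroup G) (T : Set (Set G)) : Set (Set Q) :=
  insert {0} ((fun E : Set G => π '' E) '' {E | E ∈ T ∧ ¬ E ⊆ (K : Set G)})

def Cond (K : AddSubgroup G) (S : Set (Set K)) (T : Set (Set G)) : Prop :=
  IsSchurPartition T ∧
  IsBlockUnion T (K : Set G) ∧
  {C | C ∈ T ∧ C ⊆ (K : Set G)} = (fun B : Set K => ((↑) '' B : Set G)) '' S ∧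
  ∀ C ∈ T, ¬ C ⊆ (K : Set G) → ∀ g ∈ C, ∀ h ∈ K, g + h ∈ C


open Classical in
theorem up_good [Finite G] [Finite Q]
    (π : G →+ Q) (hsurj : Function.Surjective π) (K : AddSubgroup G)
    (hker : ∀ x, π x = 0 ↔ x ∈ K) (d : ℕ) (hd : 0 < d)
    (hfib : ∀ q, {x : G | π x = q}.ncard = d)
    (S : Set (Set K)) (hS : IsSchurPartition S)
    (P : Set (Set Q)) (hP : IsSchurPartition P) :
    Cond K S (upPart π K S P) := by
  obtain ⟨hSpart, hS0, hSneg, hSmul⟩ := hS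
  obtain ⟨hPpart, hP0, hPneg, hPmul⟩ := hP
  set U := upPart π K S P with hU
  have hcoe : ∀ B : Set K, ((↑) '' B : Set G) = ⇑K.subtype '' B := by
    intro B; rw [AddSubgroup.coe_subtype]
  -- basic facts
  have hnot0 : ∀ B ∈ P, B ≠ {0} → (0 : Q) ∉ B := by
    intro B hB hne h0
    exact hne (blocks_eq hPpart hB hP0 h0 rfl)
  have hpredisj : ∀ B, B ∈ P → B ≠ {0} → ∀ x ∈ π ⁻¹' B, x ∉ (K : Set G) := by
    intro B hB hne x hx hxK
    exact hnot0 B hB hne (by rwa [← (hker x).2 hxK])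
  have himgsub : ∀ C₀ : Set K, ((↑) '' C₀ : Set G) ⊆ (K : Set G) := by
    rintro C₀ x ⟨c, _, rfl⟩; exact c.2
  have himgpi : ∀ C₀ : Set K, ∀ a ∈ ((↑) '' C₀ : Set G), π a = 0 := by
    rintro C₀ a ha; exact (hker a).2 (himgsub C₀ ha)
  have hSne : ∀ C ∈ S, C.Nonempty := by
    intro C hC
    exact Set.nonempty_iff_ne_empty.2 (fun h => hSpart.1 (h ▸ hC))
  have hPne : ∀ B ∈ P, B.Nonempty := by
    intro B hB
    exact Set.nonempty_iff_ne_empty.2 (fun h => hPpart.1 (h ▸ hB))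
  have hprene : ∀ B : Set Q, B.Nonempty → (π ⁻¹' B).Nonempty := by
    rintro B ⟨q, hq⟩
    obtain ⟨x, rfl⟩ := hsurj q
    exact ⟨x, hq⟩
  have hprenotsub : ∀ B, B ∈ P → B ≠ {0} → ¬ (π ⁻¹' B ⊆ (K : Set G)) := by
    intro B hB hne hsub
    obtain ⟨x, hx⟩ := hprene B (hPne B hB)
    exact hpredisj B hB hne x hx (hsub hx)
  -- partition
  have hpart : Setoid.IsPartition U := by
    constructor
    · rintro (⟨C₀, hC₀, h⟩ | ⟨B, ⟨hB, hBne⟩, h⟩)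
      · rw [Set.image_eq_empty] at h
        exact hSpart.1 (h ▸ hC₀)
      · obtain ⟨x, hx⟩ := hprene B (hPne B hB)
        beta_reduce at h
        rw [h] at hx
        exact hx
    · intro g
      by_cases hg : g ∈ K
      · obtain ⟨C₀, ⟨hC₀S, hgC₀⟩, huniq⟩ := hSpart.2 ⟨g, hg⟩
        refine ⟨(↑) '' C₀, ⟨Or.inl ⟨C₀, hC₀S, rfl⟩, ⟨⟨g, hg⟩, hgC₀, rfl⟩⟩, ?_⟩
        rintro E ⟨(⟨C₁, hC₁, rfl⟩ | ⟨B, ⟨hB, hBne⟩, rfl⟩), hgE⟩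
        · obtain ⟨c, hc, hce⟩ := hgE
          have hcg : c = ⟨g, hg⟩ := Subtype.ext hce
          rw [huniq C₁ ⟨hC₁, hcg ▸ hc⟩]
        · exact absurd hg (hpredisj B hB hBne g hgE)
      · have hπg : π g ≠ 0 := fun h => hg ((hker g).1 h)
        obtain ⟨B, ⟨hBP, hgB⟩, huniq⟩ := hPpart.2 (π g)
        have hBne : B ≠ {0} := by
          rintro rfl; exact hπg hgB
        refine ⟨π ⁻¹' B, ⟨Or.inr ⟨B, ⟨hBP, hBne⟩, rfl⟩, hgB⟩, ?_⟩
        rintro E ⟨(⟨C₁, hC₁, rfl⟩ | ⟨B', ⟨hB', hB'ne⟩, rfl⟩), hgE⟩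
        · exact absurd (himgsub C₁ hgE) hg
        · rw [huniq B' ⟨hB', hgE⟩]
  -- zero block
  have h0mem : ({0} : Set G) ∈ U := by
    refine Or.inl ⟨{0}, hS0, ?_⟩
    show ((↑) '' ({0} : Set K) : Set G) = {0}
    rw [Set.image_singleton]
    simp
  -- inverses
  have hneg : ∀ C ∈ U, -C ∈ U := by
    rintro C (⟨C₀, hC₀, rfl⟩ | ⟨B, ⟨hB, hBne⟩, rfl⟩)
    · refine Or.inl ⟨-C₀, hSneg C₀ hC₀, ?_⟩
      ext x
      simp only [Set.mem_neg, Set.mem_image]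
      constructor
      · rintro ⟨c, hc, hcx⟩
        refine ⟨-c, by simpa using hc, ?_⟩
        have : ((-c : K) : G) = -(c : G) := by push_cast; ring
        rw [this, hcx]
      · rintro ⟨c, hc, hcx⟩
        refine ⟨-c, by simpa [Set.mem_neg] using hc, ?_⟩
        have : ((-c : K) : G) = -(c : G) := by push_cast; ring
        rw [this, hcx, neg_neg]
    · refine Or.inr ⟨-B, ⟨hPneg B hB, ?_⟩, ?_⟩
      · intro h
        exact hBne (by rw [← neg_neg B, h]; simp)
      · ext x
        simp [Set.mem_neg, map_neg]
  -- value computations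
  have v2 : ∀ (C₀ C₀' : Set K) (a : K),
      cnt ((↑) '' C₀ : Set G) ((↑) '' C₀') (a : G) = cnt C₀ C₀' a := by
    intro C₀ C₀' a
    rw [hcoe, hcoe]
    exact cnt_image K.subtype K.subtype_injective C₀ C₀' a
  have v4 : ∀ (B B' : Set Q) (g : G),
      cnt (π ⁻¹' B) (π ⁻¹' B') g = d * cnt B B' (π g) :=
    fun B B' g => cnt_sat_sat π hfib B B' g
  -- the product condition
  have hprod : ∀ A ∈ U, ∀ B ∈ U, ∀ E ∈ U, ∀ a ∈ E, ∀ b ∈ E, cnt A B a = cnt A B b := by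
    have mixed : ∀ (C₀ : Set K), ∀ B' ∈ P, B' ≠ {0} → ∀ E ∈ U, ∀ a ∈ E, ∀ b ∈ E,
        cnt ((↑) '' C₀ : Set G) (π ⁻¹' B') a = cnt ((↑) '' C₀) (π ⁻¹' B') b := by
      intro C₀ B' hB' hB'ne E hE a ha b hb
      rw [cnt_mixed π (himgpi C₀) B' a, cnt_mixed π (himgpi C₀) B' b]
      rcases hE with ⟨E₀, hE₀, rfl⟩ | ⟨B'', ⟨hB'', hB''ne⟩, rfl⟩
      · rw [himgpi E₀ a ha, himgpi E₀ b hb]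
      · refine if_congr ⟨fun h => ?_, fun h => ?_⟩ rfl rfl
        · have heq : B'' = B' := blocks_eq hPpart hB'' hB' (show π a ∈ B'' from ha) h
          exact heq ▸ (show π b ∈ B'' from hb)
        · have heq : B'' = B' := blocks_eq hPpart hB'' hB' (show π b ∈ B'' from hb) h
          exact heq ▸ (show π a ∈ B'' from ha)
    intro A hA B hB E hE a ha b hb
    rcases hA with ⟨C₀, hC₀, rfl⟩ | ⟨B₀, ⟨hB₀, hB₀ne⟩, rfl⟩ <;>
      rcases hB with ⟨C₀', hC₀', rfl⟩ | ⟨B₀', ⟨hB₀', hB₀'ne⟩, rfl⟩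
    · -- image, image
      rcases hE with ⟨E₀, hE₀, rfl⟩ | ⟨B'', ⟨hB'', hB''ne⟩, rfl⟩
      · obtain ⟨α, hα, rfl⟩ := ha
        obtain ⟨β, hβ, rfl⟩ := hb
        rw [v2, v2]
        exact (schur_prod_iff hSpart C₀ C₀').1 (hSmul C₀ hC₀ C₀' hC₀') E₀ hE₀ α hα β hβ
      · rw [cnt_eq_zero K (himgsub C₀) (himgsub C₀') (hpredisj B'' hB'' hB''ne a ha),
          cnt_eq_zero K (himgsub C₀) (himgsub C₀') (hpredisj B'' hB'' hB''ne b hb)]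
    · exact mixed C₀ B₀' hB₀' hB₀'ne E hE a ha b hb
    · rw [cnt_comm, cnt_comm (π ⁻¹' B₀)]
      exact mixed C₀' B₀ hB₀ hB₀ne E hE a ha b hb
    · rw [v4, v4]
      rcases hE with ⟨E₀, hE₀, rfl⟩ | ⟨B'', ⟨hB'', hB''ne⟩, rfl⟩
      · rw [himgpi E₀ a ha, himgpi E₀ b hb]
      · congr 1
        exact (schur_prod_iff hPpart B₀ B₀').1 (hPmul B₀ hB₀ B₀' hB₀') B'' hB'' (π a) ha (π b) hb
  refine ⟨⟨hpart, h0mem, hneg, ?_⟩, ?_, ?_, ?_⟩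
  · intro A hA B hB
    rw [schur_prod_iff hpart]
    exact fun E hE a ha b hb => hprod A hA B hB E hE a ha b hb
  · -- IsBlockUnion
    rintro C (⟨C₀, hC₀, rfl⟩ | ⟨B, ⟨hB, hBne⟩, rfl⟩) hne
    · exact himgsub C₀
    · obtain ⟨x, hx1, hx2⟩ := hne
      exact absurd hx2 (hpredisj B hB hBne x hx1)
  · -- blocks inside K are exactly images of S
    ext C
    constructor
    · rintro ⟨⟨C₀, hC₀, rfl⟩ | ⟨B, ⟨hB, hBne⟩, rfl⟩, hsub⟩
      · exact ⟨C₀, hC₀, rfl⟩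
      · exact absurd hsub (hprenotsub B hB hBne)
    · rintro ⟨C₀, hC₀, rfl⟩
      exact ⟨Or.inl ⟨C₀, hC₀, rfl⟩, himgsub C₀⟩
  · -- saturation
    rintro C (⟨C₀, hC₀, rfl⟩ | ⟨B, ⟨hB, hBne⟩, rfl⟩) hnsub g hg h hh
    · exact absurd (himgsub C₀) hnsub
    · have : π (g + h) = π g := by
        rw [map_add, (hker h).2 hh, add_zero]
      simpa [Set.mem_preimage, this] using hg

open Classical in
theorem down_good [Finite G] [Finite Q]
    (π : G →+ Q) (hsurj : Function.Surjective π) (K : AddSubgroup G)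
    (hker : ∀ x, π x = 0 ↔ x ∈ K) (d : ℕ) (hd : 0 < d)
    (hfib : ∀ q, {x : G | π x = q}.ncard = d)
    (S : Set (Set K))
    (T : Set (Set G)) (hT : Cond K S T) :
    IsSchurPartition (downPart π K T) := by
  obtain ⟨⟨hTpart, hT0, hTneg, hTmul⟩, hTblock, hTin, hTsat⟩ := hT
  set V := downPart π K T with hV
  have hTne : ∀ E ∈ T, E.Nonempty := by
    intro E hE
    exact Set.nonempty_iff_ne_empty.2 (fun h => hTpart.1 (h ▸ hE))
  have hsat : ∀ E ∈ T, ¬ E ⊆ (K : Set G) → π ⁻¹' (π '' E) = E := by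
    intro E hE hnsub
    apply Set.Subset.antisymm
    · rintro x ⟨e, heE, hex⟩
      have hxe : x - e ∈ K := (hker (x - e)).1 (by rw [map_sub, hex, sub_self])
      have := hTsat E hE hnsub e heE (x - e) hxe
      simpa using this
    · intro x hx
      exact ⟨x, hx, rfl⟩
  have hno0 : ∀ E ∈ T, ¬ E ⊆ (K : Set G) → (0 : Q) ∉ π '' E := by
    rintro E hE hnsub ⟨e, heE, he0⟩
    exact hnsub (hTblock E hE ⟨e, heE, (hker e).1 he0⟩)
  -- partition
  have hpart : Setoid.IsPartition V := by
    constructor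
    · intro hmem
      rcases Set.mem_insert_iff.1 hmem with h | ⟨E, ⟨hE, hnsub⟩, h⟩
      · exact Set.singleton_ne_empty (0 : Q) h.symm
      · beta_reduce at h
        obtain ⟨e, heE⟩ := hTne E hE
        have : π e ∈ π '' E := ⟨e, heE, rfl⟩
        rw [h] at this
        exact this
    · intro q
      by_cases hq : q = 0
      · subst hq
        refine ⟨{0}, ⟨Set.mem_insert _ _, rfl⟩, ?_⟩
        intro E' ⟨hmem, h0⟩
        rcases Set.mem_insert_iff.1 hmem with rfl | ⟨E, ⟨hE, hnsub⟩, rfl⟩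
        · rfl
        · exact absurd h0 (hno0 E hE hnsub)
      · obtain ⟨x, rfl⟩ := hsurj q
        have hxK : x ∉ (K : Set G) := fun h => hq ((hker x).2 h)
        obtain ⟨E, ⟨hET, hxE⟩, huniq⟩ := hTpart.2 x
        have hnsub : ¬ E ⊆ (K : Set G) := fun h => hxK (h hxE)
        refine ⟨π '' E, ⟨Set.mem_insert_of_mem _ ⟨E, ⟨hET, hnsub⟩, rfl⟩, ⟨x, hxE, rfl⟩⟩, ?_⟩
        intro E' ⟨hmem, hqE'⟩
        rcases Set.mem_insert_iff.1 hmem with rfl | ⟨E₁, ⟨hE₁, hnsub₁⟩, rfl⟩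
        · exact absurd (Set.mem_singleton_iff.1 hqE') hq
        · show π '' E₁ = π '' E
          obtain ⟨y, hyE₁, hyx⟩ := hqE'
          have hx1 : x ∈ π ⁻¹' (π '' E₁) := ⟨y, hyE₁, hyx⟩
          rw [hsat E₁ hE₁ hnsub₁] at hx1
          rw [blocks_eq hTpart hE₁ hET hx1 hxE]
  -- value lemmas
  have czero : ∀ (B : Set Q) (q : Q), cnt {0} B q = if q ∈ B then 1 else 0 := by
    intro B q
    rw [cnt]
    have : {a ∈ ({0} : Set Q) | q - a ∈ B} = if q ∈ B then {0} else ∅ := by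
      ext a
      simp only [Set.mem_setOf_eq, Set.mem_singleton_iff]
      constructor
      · rintro ⟨rfl, hb⟩
        rw [sub_zero] at hb
        simp [hb]
      · intro h
        split_ifs at h with hc
        · rw [Set.mem_singleton_iff] at h
          exact ⟨h, by rw [h, sub_zero]; exact hc⟩
        · exact absurd h (Set.notMem_empty a)
    rw [this]
    split_ifs <;> simp
  have czconst : ∀ B ∈ V, ∀ E'' ∈ V, ∀ a ∈ E'', ∀ b ∈ E'',
      cnt ({0} : Set Q) B a = cnt {0} B b := by
    intro B hB E'' hE'' a ha b hb
    rw [czero, czero]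
    refine if_congr ⟨fun h => ?_, fun h => ?_⟩ rfl rfl
    · exact (blocks_eq hpart hE'' hB ha h) ▸ hb
    · exact (blocks_eq hpart hE'' hB hb h) ▸ ha
  have vimg : ∀ E ∈ T, ¬ E ⊆ (K : Set G) → ∀ E' ∈ T, ¬ E' ⊆ (K : Set G) → ∀ g : G,
      cnt E E' g = d * cnt (π '' E) (π '' E') (π g) := by
    intro E hE hn E' hE' hn' g
    conv_lhs => rw [← hsat E hE hn, ← hsat E' hE' hn']
    exact cnt_sat_sat π hfib _ _ g
  refine ⟨hpart, Set.mem_insert _ _, ?_, ?_⟩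
  · -- inverses
    intro C hC
    rcases Set.mem_insert_iff.1 hC with rfl | ⟨E, ⟨hE, hnsub⟩, rfl⟩
    · rw [hV]
      refine Set.mem_insert_iff.2 (Or.inl ?_)
      simp
    · rw [hV]
      refine Set.mem_insert_iff.2 (Or.inr ⟨-E, ⟨hTneg E hE, ?_⟩, ?_⟩)
      · intro h
        obtain ⟨e, heE, heK⟩ := Set.not_subset.1 hnsub
        have : -e ∈ (K : Set G) := h (by simpa using heE)
        exact heK (by simpa using K.neg_mem this)
      · show π '' (-E) = -((fun E => π '' E) E)
        beta_reduce
        ext q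
        simp only [Set.mem_image, Set.mem_neg]
        constructor
        · rintro ⟨y, hy, rfl⟩
          exact ⟨-y, hy, by rw [map_neg]⟩
        · rintro ⟨y, hy, hyq⟩
          exact ⟨-y, by simpa using hy, by rw [map_neg, hyq, neg_neg]⟩
  · -- products
    intro A hA B hB
    rw [schur_prod_iff hpart]
    intro E'' hE'' a ha b hb
    rcases Set.mem_insert_iff.1 hA with rfl | ⟨E, ⟨hET, hEn⟩, rfl⟩
    · exact czconst B hB E'' hE'' a ha b hb
    rcases Set.mem_insert_iff.1 hB with rfl | ⟨E', ⟨hE'T, hE'n⟩, rfl⟩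
    · rw [cnt_comm, cnt_comm ((fun E => π '' E) E)]
      exact czconst _ hA E'' hE'' a ha b hb
    rcases Set.mem_insert_iff.1 hE'' with rfl | ⟨E₂, ⟨hE₂T, hE₂n⟩, rfl⟩
    · rw [Set.mem_singleton_iff] at ha hb
      rw [ha, hb]
    · obtain ⟨g, hg, rfl⟩ := ha
      obtain ⟨g', hg', rfl⟩ := hb
      have h1 := (schur_prod_iff hTpart E E').1 (hTmul E hET E' hE'T) E₂ hE₂T g hg g' hg'
      rw [vimg E hET hEn E' hE'T hE'n g, vimg E hET hEn E' hE'T hE'n g'] at h1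
      exact Nat.eq_of_mul_eq_mul_left hd h1

theorem down_up [Finite G] [Finite Q]
    (π : G →+ Q) (hsurj : Function.Surjective π) (K : AddSubgroup G)
    (hker : ∀ x, π x = 0 ↔ x ∈ K)
    (S : Set (Set K)) (hS : IsSchurPartition S)
    (P : Set (Set Q)) (hP : IsSchurPartition P) :
    downPart π K (upPart π K S P) = P := by
  obtain ⟨hPpart, hP0, hPneg, hPmul⟩ := hP
  have hPne : ∀ B ∈ P, B.Nonempty := by
    intro B hB
    exact Set.nonempty_iff_ne_empty.2 (fun h => hPpart.1 (h ▸ hB))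
  have hnot0 : ∀ B ∈ P, B ≠ {0} → (0 : Q) ∉ B := by
    intro B hB hne h0
    exact hne (blocks_eq hPpart hB hP0 h0 rfl)
  have himgsub : ∀ C₀ : Set K, ((↑) '' C₀ : Set G) ⊆ (K : Set G) := by
    rintro C₀ x ⟨c, _, rfl⟩; exact c.2
  have hprenotsub : ∀ B, B ∈ P → B ≠ {0} → ¬ (π ⁻¹' B ⊆ (K : Set G)) := by
    intro B hB hne hsub
    obtain ⟨q, hq⟩ := hPne B hB
    obtain ⟨x, rfl⟩ := hsurj q
    exact hnot0 B hB hne ((hker x).2 (hsub hq) ▸ hq)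
  ext B
  constructor
  · intro hmem
    rcases Set.mem_insert_iff.1 hmem with rfl | ⟨E, ⟨hEU, hEn⟩, rfl⟩
    · exact hP0
    · rcases hEU with ⟨C₀, hC₀, rfl⟩ | ⟨B₀, ⟨hB₀, hB₀ne⟩, rfl⟩
      · exact absurd (himgsub C₀) hEn
      · show π '' (π ⁻¹' B₀) ∈ P
        rw [Set.image_preimage_eq B₀ hsurj]
        exact hB₀
  · intro hB
    by_cases hBne : B = {0}
    · exact hBne ▸ Set.mem_insert _ _
    · refine Set.mem_insert_of_mem _ ⟨π ⁻¹' B, ⟨Or.inr ⟨B, ⟨hB, hBne⟩, rfl⟩,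
        hprenotsub B hB hBne⟩, ?_⟩
      show π '' (π ⁻¹' B) = B
      exact Set.image_preimage_eq B hsurj

theorem up_down [Finite G] [Finite Q]
    (π : G →+ Q) (hsurj : Function.Surjective π) (K : AddSubgroup G)
    (hker : ∀ x, π x = 0 ↔ x ∈ K)
    (S : Set (Set K))
    (T : Set (Set G)) (hT : Cond K S T) :
    upPart π K S (downPart π K T) = T := by
  obtain ⟨⟨hTpart, hT0, hTneg, hTmul⟩, hTblock, hTin, hTsat⟩ := hT
  have hsat : ∀ E ∈ T, ¬ E ⊆ (K : Set G) → π ⁻¹' (π '' E) = E := by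
    intro E hE hnsub
    apply Set.Subset.antisymm
    · rintro x ⟨e, heE, hex⟩
      have hxe : x - e ∈ K := (hker (x - e)).1 (by rw [map_sub, hex, sub_self])
      have := hTsat E hE hnsub e heE (x - e) hxe
      simpa using this
    · intro x hx
      exact ⟨x, hx, rfl⟩
  have hno0 : ∀ E ∈ T, ¬ E ⊆ (K : Set G) → (0 : Q) ∉ π '' E := by
    rintro E hE hnsub ⟨e, heE, he0⟩
    exact hnsub (hTblock E hE ⟨e, heE, (hker e).1 he0⟩)
  ext C
  constructor
  · intro hmem
    rcases hmem with ⟨C₀, hC₀, rfl⟩ | ⟨B₀, ⟨hB₀, hB₀ne⟩, rfl⟩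
    · have : (fun B : Set K => ((↑) '' B : Set G)) C₀ ∈ {C | C ∈ T ∧ C ⊆ (K : Set G)} := by
        rw [hTin]
        exact ⟨C₀, hC₀, rfl⟩
      exact this.1
    · rcases Set.mem_insert_iff.1 hB₀ with rfl | ⟨E, ⟨hET, hEn⟩, rfl⟩
      · exact absurd rfl hB₀ne
      · show π ⁻¹' (π '' E) ∈ T
        rw [hsat E hET hEn]
        exact hET
  · intro hC
    by_cases hsub : C ⊆ (K : Set G)
    · have : C ∈ {C | C ∈ T ∧ C ⊆ (K : Set G)} := ⟨hC, hsub⟩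
      rw [hTin] at this
      exact Or.inl this
    · refine Or.inr ⟨π '' C, ⟨Set.mem_insert_of_mem _ ⟨C, ⟨hC, hsub⟩, rfl⟩, ?_⟩, ?_⟩
      · intro h
        exact hno0 C hC hsub (h ▸ rfl)
      · show π ⁻¹' (π '' C) = C
        exact hsat C hC hsub

theorem main_abstract [Finite G] [Finite Q]
    (π : G →+ Q) (hsurj : Function.Surjective π) (K : AddSubgroup G)
    (hker : ∀ x, π x = 0 ↔ x ∈ K) (d : ℕ) (hd : 0 < d)
    (hfib : ∀ q, {x : G | π x = q}.ncard = d)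
    (S : Set (Set K)) (hS : IsSchurPartition S) :
    Nat.card {T : Set (Set G) //
        IsSchurPartition T ∧
        IsBlockUnion T (K : Set G) ∧
        {C | C ∈ T ∧ C ⊆ (K : Set G)} =
          (fun B : Set K => ((↑) '' B : Set G)) '' S ∧
        ∀ C ∈ T, ¬ C ⊆ (K : Set G) → ∀ g ∈ C, ∀ h ∈ K, g + h ∈ C} =
      Nat.card {P : Set (Set Q) // IsSchurPartition P} := by
  refine Nat.card_congr ⟨fun T => ⟨downPart π K T.1, down_good π hsurj K hker d hd hfib S T.1 T.2⟩,
    fun P => ⟨upPart π K S P.1, up_good π hsurj K hker d hd hfib S hS P.1 P.2⟩, ?_, ?_⟩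
  · intro T; exact Subtype.ext (up_down π hsurj K hker S T.1 T.2)
  · intro P; exact Subtype.ext (down_up π hsurj K hker S hS P.1 P.2)


/-- If `S` is a primitive Schur partition of the subgroup `D` of order `d` of `ℤ/nℤ`,
then the number of Schur partitions of `ℤ/nℤ` restricting to `S` on `D` and whose blocks
outside `D` are unions of cosets of `D` equals `Ω(n/d)`. -/
theorem wedge_over_primitive_count (n d : ℕ) (hn : 0 < n) (hd : 0 < d) (hdvd : d ∣ n)
    (D : AddSubgroup (ZMod n)) (hD : Nat.card D = d)
    (S : Set (Set D)) (hS : IsSchurPartition S)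
    (hprim : ∀ H : AddSubgroup D, IsBlockUnion S (H : Set D) → H = ⊥ ∨ H = ⊤) :
    Nat.card {T : Set (Set (ZMod n)) //
        IsSchurPartition T ∧
        IsBlockUnion T (D : Set (ZMod n)) ∧
        {C | C ∈ T ∧ C ⊆ (D : Set (ZMod n))} =
          (fun B : Set D => ((↑) '' B : Set (ZMod n))) '' S ∧
        ∀ C ∈ T, ¬ C ⊆ (D : Set (ZMod n)) → ∀ g ∈ C, ∀ h ∈ D, g + h ∈ C} =
      Omega (n / d) := by
  obtain ⟨π, hsurj, hker, hfib⟩ := zmod_setup n d hn hd hdvd D hD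
  haveI : NeZero n := ⟨hn.ne'⟩
  haveI : NeZero (n / d) := ⟨(Nat.div_pos (Nat.le_of_dvd hn hdvd) hd).ne'⟩
  exact main_abstract π hsurj D hker d hd hfib S hS
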